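/- For K ≥ 2, the map from r ∈ (1, ∞) to ρ(r) = (K·r³ + 3K(K−1)·r + K(K−1)(K−2)) / (r + K − 1)³ is injective; consequently the in-out-ratio r is uniquely determined by the value of ρ. -/

import Mathlib

noncomputable def rho (K : ℕ) (r : ℝ) : ℝ :=
  ((K : ℝ) * r ^ 3 + 3 * K * (K - 1) * r + K * (K - 1) * (K - 2)) / (r + K - 1) ^ 3

theorem stmt_5 (K : ℕ) (hK : 2 ≤ K) :
    Set.InjOn (rho K) (Set.Ioi (1 : ℝ)) := by
  have hK2 : (2 : ℝ) ≤ (K : ℝ) := by exact_mod_cast hK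
  set c : ℝ := (K : ℝ) - 1 with hc
  have hc1 : (1 : ℝ) ≤ c := by simp [hc]; linarith
  have hKpos : (0 : ℝ) < (K : ℝ) := by linarith
  have hrho : rho K = fun r : ℝ =>
      ((K : ℝ) * r ^ 3 + 3 * K * c * r + K * c * (c - 1)) / (r + c) ^ 3 := by
    funext r
    unfold rho
    rw [hc]
    ring
  rw [hrho]
  apply StrictMonoOn.injOn
  apply strictMonoOn_of_deriv_pos (convex_Ioi 1)
  · apply ContinuousOn.div
    · fun_prop
    · fun_prop
    · intro x hx
      have hx1 : (1 : ℝ) < x := hx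
      have : (0 : ℝ) < x + c := by linarith
      positivity
  · intro x hx
    rw [interior_Ioi] at hx
    have hx1 : (1 : ℝ) < x := hx
    have hxc : (0 : ℝ) < x + c := by linarith
    have hD : ((x + c) ^ 3 : ℝ) ≠ 0 := by positivity
    have h1 : HasDerivAt (fun r : ℝ => (K : ℝ) * r ^ 3 + 3 * K * c * r + K * c * (c - 1))
        (3 * K * x ^ 2 + 3 * K * c) x := by
      have h := (((hasDerivAt_pow 3 x).const_mul (K : ℝ)).add
        ((hasDerivAt_id x).const_mul (3 * (K : ℝ) * c))).add_const ((K : ℝ) * c * (c - 1))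
      convert h using 1
      · rfl
      · rfl
      simp
      ring
    have h2 : HasDerivAt (fun r : ℝ => (r + c) ^ 3) (3 * (x + c) ^ 2) x := by
      have h := ((hasDerivAt_id x).add_const c).pow 3
      convert h using 1
      · rfl
      · rfl
      simp
      · rfl
      · norm_num
    have hdiv := h1.div h2 hD
    rw [show deriv (fun r : ℝ => ((K : ℝ) * r ^ 3 + 3 * K * c * r + K * c * (c - 1)) / (r + c) ^ 3) x = _ from hdiv.deriv]
    have hnum : (3 * (K : ℝ) * x ^ 2 + 3 * K * c) * (x + c) ^ 3 -
        ((K : ℝ) * x ^ 3 + 3 * K * c * x + K * c * (c - 1)) * (3 * (x + c) ^ 2) =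
        3 * K * c * (x - 1) ^ 2 * (x + c) ^ 2 := by ring
    rw [hnum]
    have hx1' : (0 : ℝ) < x - 1 := by linarith
    have hcpos : (0 : ℝ) < c := by linarith
    positivity
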